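/- Let (X,𝔅,μ,T) be a measure-preserving system and α, β finite measurable partitions of X. Then the upper entropy dimension of the common refinement satisfies D̄_μ(T, α ∨ β) = max{ D̄_μ(T,α), D̄_μ(T,β) }. -/

import Mathlib

open MeasureTheory Filter Set
open scoped ENNReal symmDiff

noncomputable section

namespace EntDim

/-- An increasing sequence of positive integers `S = {s 0 < s 1 < ⋯}` (0-indexed,
so `s n` is the `(n+1)`-st element of `S`). -/
def IsPosSeq (s : ℕ → ℕ) : Prop := StrictMono s ∧ 0 < s 0

/-- `D̄(S,τ) = limsup_n n / (s_n)^τ` (with the convention that the `n`-th term,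
for `n` starting at `0`, is `(n+1)/(s n)^τ`, matching the 1-indexed definition). -/
def dimExprSup (s : ℕ → ℕ) (τ : ℝ) : ℝ≥0∞ :=
  Filter.atTop.limsup fun n : ℕ => ((n : ℝ≥0∞) + 1) / (s n : ℝ≥0∞) ^ τ

/-- `D̲(S,τ) = liminf_n n / (s_n)^τ`. -/
def dimExprInf (s : ℕ → ℕ) (τ : ℝ) : ℝ≥0∞ :=
  Filter.atTop.liminf fun n : ℕ => ((n : ℝ≥0∞) + 1) / (s n : ℝ≥0∞) ^ τ

/-- The upper dimension `D̄(S) = inf {τ ≥ 0 | D̄(S,τ) = 0}` of a sequence. -/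
def upperDim (s : ℕ → ℕ) : ℝ := sInf {τ : ℝ | 0 ≤ τ ∧ dimExprSup s τ = 0}

/-- The lower dimension `D̲(S) = inf {τ ≥ 0 | D̲(S,τ) = 0}` of a sequence. -/
def lowerDim (s : ℕ → ℕ) : ℝ := sInf {τ : ℝ | 0 ≤ τ ∧ dimExprInf s τ = 0}

variable {X : Type*} [MeasurableSpace X]

/-- `P : ι → Set X` is a finite measurable partition of `X`. -/
def IsPartition {ι : Type*} [Fintype ι] (P : ι → Set X) : Prop :=
  (∀ i, MeasurableSet (P i)) ∧ Pairwise (Function.onFun Disjoint P) ∧ (⋃ i, P i) = Set.univ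

/-- The entropy `H_μ(⋁_{i ∈ F} T^{-f i} P)` of the join of the preimage partitions
`T^{-f i} P` over a finite index set `F`. -/
def finJoinEnt (μ : Measure X) (T : X → X) {ι : Type*} [Fintype ι] (P : ι → Set X)
    (f : ℕ → ℕ) (F : Finset ℕ) : ℝ :=
  ∑ ω : F → ι, Real.negMulLog (μ (⋂ i : F, T^[f i.1] ⁻¹' (P (ω i)))).toReal

/-- `H_μ(⋁_{i=1}^{n} T^{-s_i} P)` (with `s` 0-indexed: this is the join over the
first `n` elements of the sequence). -/
def seqJoinEnt (μ : Measure X) (T : X → X) {ι : Type*} [Fintype ι] (P : ι → Set X)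
    (s : ℕ → ℕ) (n : ℕ) : ℝ :=
  finJoinEnt μ T P s (Finset.range n)

/-- `S` is an entropy generating sequence of the partition `P`:
`liminf_n (1/n) H_μ(⋁_{i=1}^n T^{-s_i} P) > 0`. -/
def IsEntGenSeq (μ : Measure X) (T : X → X) {ι : Type*} [Fintype ι] (P : ι → Set X)
    (s : ℕ → ℕ) : Prop :=
  IsPosSeq s ∧ 0 < Filter.atTop.liminf fun n : ℕ => seqJoinEnt μ T P s n / n

/-- `S` is a positive entropy sequence of the partition `P`:
`limsup_n (1/n) H_μ(⋁_{i=1}^n T^{-s_i} P) > 0`. -/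
def IsPosEntSeq (μ : Measure X) (T : X → X) {ι : Type*} [Fintype ι] (P : ι → Set X)
    (s : ℕ → ℕ) : Prop :=
  IsPosSeq s ∧ 0 < Filter.atTop.limsup fun n : ℕ => seqJoinEnt μ T P s n / n

/-- `D̄^e_μ(T,P)`: the supremum of upper dimensions over entropy generating sequences
of `P` (`0`, by convention `sSup ∅ = 0`, if there are none). This is the upper
entropy dimension `D̄_μ(T,P)` of the partition `P`. -/
def upperEntDimPart (μ : Measure X) (T : X → X) {ι : Type*} [Fintype ι]
    (P : ι → Set X) : ℝ :=
  sSup {d : ℝ | ∃ s : ℕ → ℕ, IsEntGenSeq μ T P s ∧ d = upperDim s}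

/-- `D̲^e_μ(T,P)`: the supremum of lower dimensions over entropy generating sequences,
i.e. the lower entropy dimension `D̲_μ(T,P)` of the partition `P`. -/
def lowerEntDimPart (μ : Measure X) (T : X → X) {ι : Type*} [Fintype ι]
    (P : ι → Set X) : ℝ :=
  sSup {d : ℝ | ∃ s : ℕ → ℕ, IsEntGenSeq μ T P s ∧ d = lowerDim s}

/-- `D̄^p_μ(T,P)`: the supremum of upper dimensions over positive entropy sequences of `P`. -/
def upperPosDimPart (μ : Measure X) (T : X → X) {ι : Type*} [Fintype ι]
    (P : ι → Set X) : ℝ :=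
  sSup {d : ℝ | ∃ s : ℕ → ℕ, IsPosEntSeq μ T P s ∧ d = upperDim s}

/-- `D̲^p_μ(T,P)`: the supremum of lower dimensions over positive entropy sequences of `P`. -/
def lowerPosDimPart (μ : Measure X) (T : X → X) {ι : Type*} [Fintype ι]
    (P : ι → Set X) : ℝ :=
  sSup {d : ℝ | ∃ s : ℕ → ℕ, IsPosEntSeq μ T P s ∧ d = lowerDim s}

/-- The upper metric entropy dimension `D̄_μ(X,T)`: the supremum of `D̄_μ(T,P)`
over all finite measurable partitions `P` of `X`. -/
def upperEntDim (μ : Measure X) (T : X → X) : ℝ :=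
  sSup {d : ℝ | ∃ (k : ℕ) (P : Fin k → Set X), IsPartition P ∧ d = upperEntDimPart μ T P}

/-- The lower metric entropy dimension `D̲_μ(X,T)`. -/
def lowerEntDim (μ : Measure X) (T : X → X) : ℝ :=
  sSup {d : ℝ | ∃ (k : ℕ) (P : Fin k → Set X), IsPartition P ∧ d = lowerEntDimPart μ T P}

/-- `D̄^p_μ(X,T)`: the supremum of `D̄^p_μ(T,P)` over all finite measurable partitions. -/
def upperPosDim (μ : Measure X) (T : X → X) : ℝ :=
  sSup {d : ℝ | ∃ (k : ℕ) (P : Fin k → Set X), IsPartition P ∧ d = upperPosDimPart μ T P}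

/-- The two-set partition `{A, X \ A}`. -/
def pairPart (A : Set X) : Fin 2 → Set X := ![A, Aᶜ]

/-- The dimension set `Dims_μ(X,T) = {D̄_μ(T,{A,Aᶜ}) : A ∈ 𝔅, 0 < μ(A) < 1}`. -/
def dimsSet (μ : Measure X) (T : X → X) : Set ℝ :=
  {d : ℝ | ∃ A : Set X, MeasurableSet A ∧ 0 < μ A ∧ μ A < 1 ∧
    d = upperEntDimPart μ T (pairPart A)}

/-- The system is null: every sequence entropy (along any increasing sequence of
positive integers, for any finite measurable partition) vanishes. -/
def IsNullSystem (μ : Measure X) (T : X → X) : Prop :=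
  ∀ (k : ℕ) (P : Fin k → Set X), IsPartition P → ∀ s : ℕ → ℕ, IsPosSeq s →
    Filter.atTop.limsup (fun n : ℕ => seqJoinEnt μ T P s n / n) = 0

end EntDim

namespace EntDim

set_option linter.dupNamespace false

section AuxEnt

lemma negMulLog_add_le {a b : ℝ} (ha : 0 ≤ a) (hb : 0 ≤ b) :
    Real.negMulLog (a + b) ≤ Real.negMulLog a + Real.negMulLog b := by
  have key : ∀ x y : ℝ, 0 ≤ x → 0 ≤ y → x * Real.log x ≤ x * Real.log (x + y) := by
    intro x y hx hy
    rcases eq_or_lt_of_le hx with h | h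
    · simp [← h]
    · exact mul_le_mul_of_nonneg_left (Real.log_le_log h (by linarith)) hx
  have h1 := key a b ha hb
  have h2 := key b a hb ha
  rw [add_comm b a] at h2
  simp only [Real.negMulLog, neg_mul]
  nlinarith [h1, h2]

lemma negMulLog_sum_le {ι : Type*} (s : Finset ι) (x : ι → ℝ) (hx : ∀ i ∈ s, 0 ≤ x i) :
    Real.negMulLog (∑ i ∈ s, x i) ≤ ∑ i ∈ s, Real.negMulLog (x i) := by
  induction s using Finset.cons_induction with
  | empty => simp
  | cons a s ha ih =>
    rw [Finset.sum_cons, Finset.sum_cons]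
    refine (negMulLog_add_le (hx a (Finset.mem_cons_self a s)) ?_).trans ?_
    · exact Finset.sum_nonneg fun i hi => hx i (Finset.mem_cons_of_mem hi)
    · exact add_le_add le_rfl (ih fun i hi => hx i (Finset.mem_cons_of_mem hi))

lemma gibbs_term {p r s t : ℝ} (hp : 0 ≤ p) (hpr : p ≤ r) (hps : p ≤ s) (hpt : p ≤ t) :
    Real.negMulLog p + p * Real.log r + p * Real.log s - p * Real.log t
      ≤ (if t = 0 then 0 else r * s / t) - p := by
  rcases eq_or_lt_of_le hp with h | h
  · rw [← h]
    simp only [Real.negMulLog_zero, zero_mul, add_zero, sub_zero, zero_add, sub_zero]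
    split
    · simp
    · have : 0 ≤ r * s / t := div_nonneg (mul_nonneg (h ▸ hpr) (h ▸ hps)) (h ▸ hpt)
      simpa using this
  · have hr : 0 < r := lt_of_lt_of_le h hpr
    have hs : 0 < s := lt_of_lt_of_le h hps
    have ht : 0 < t := lt_of_lt_of_le h hpt
    rw [if_neg (ne_of_gt ht)]
    have hq : 0 < r * s / t / p := by positivity
    have hlog := Real.log_le_sub_one_of_pos hq
    have hexp : Real.log (r * s / t / p) = Real.log r + Real.log s - Real.log t - Real.log p := by
      rw [Real.log_div (by positivity) (ne_of_gt h), Real.log_div (by positivity) (ne_of_gt ht),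
        Real.log_mul (ne_of_gt hr) (ne_of_gt hs)]
    rw [hexp] at hlog
    have H := mul_le_mul_of_nonneg_left hlog (le_of_lt h)
    have hcancel : p * (r * s / t / p) = r * s / t := by
      field_simp
    simp only [Real.negMulLog, neg_mul]
    nlinarith [H, hcancel]

lemma gibbs_sum {ι κ γ : Type*} [Fintype ι] [Fintype κ] [Fintype γ]
    (p : ι → κ → γ → ℝ) (hp : ∀ i k c, 0 ≤ p i k c)
    (htot : ∑ c, ∑ i, ∑ k, p i k c = 1) :
    (∑ i, ∑ k, ∑ c, Real.negMulLog (p i k c)) + ∑ c, Real.negMulLog (∑ i, ∑ k, p i k c)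
      ≤ (∑ i, ∑ c, Real.negMulLog (∑ k, p i k c))
        + ∑ k, ∑ c, Real.negMulLog (∑ i, p i k c) := by
  set r : ι → γ → ℝ := fun i c => ∑ k, p i k c with hr
  set s : κ → γ → ℝ := fun k c => ∑ i, p i k c with hs
  set t : γ → ℝ := fun c => ∑ i, ∑ k, p i k c with ht
  have hpr : ∀ i k c, p i k c ≤ r i c := fun i k c =>
    Finset.single_le_sum (fun k' _ => hp i k' c) (Finset.mem_univ k)
  have hps : ∀ i k c, p i k c ≤ s k c := fun i k c =>
    Finset.single_le_sum (fun i' _ => hp i' k c) (Finset.mem_univ i)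
  have hrt : ∀ i c, r i c ≤ t c := fun i c =>
    Finset.single_le_sum (f := fun i' => r i' c) (fun i' _ => Finset.sum_nonneg fun k _ => hp i' k c)
      (Finset.mem_univ i)
  have hpt : ∀ i k c, p i k c ≤ t c := fun i k c => (hpr i k c).trans (hrt i c)
  have key : ∀ i k c,
      Real.negMulLog (p i k c) + p i k c * Real.log (r i c) + p i k c * Real.log (s k c)
        - p i k c * Real.log (t c)
        ≤ (if t c = 0 then 0 else r i c * s k c / t c) - p i k c :=
    fun i k c => gibbs_term (hp i k c) (hpr i k c) (hps i k c) (hpt i k c)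
  have SUM : ∑ i, ∑ k, ∑ c, (Real.negMulLog (p i k c) + p i k c * Real.log (r i c)
      + p i k c * Real.log (s k c) - p i k c * Real.log (t c))
      ≤ ∑ i, ∑ k, ∑ c, ((if t c = 0 then 0 else r i c * s k c / t c) - p i k c) := by
    refine Finset.sum_le_sum fun i _ => Finset.sum_le_sum fun k _ => Finset.sum_le_sum
      fun c _ => key i k c
  -- RHS of SUM equals 0
  have hRHS : ∑ i, ∑ k, ∑ c, ((if t c = 0 then 0 else r i c * s k c / t c) - p i k c) = 0 := by
    have h1 : ∀ c, ∑ i, ∑ k, (if t c = 0 then 0 else r i c * s k c / t c) = t c := by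
      intro c
      by_cases h : t c = 0
      · simp [h]
      · simp only [if_neg h]
        have : ∑ i, ∑ k, r i c * s k c / t c = (∑ i, r i c) * (∑ k, s k c) / t c := by
          rw [Finset.sum_mul, Finset.sum_div]
          refine Finset.sum_congr rfl fun i _ => ?_
          rw [Finset.mul_sum, Finset.sum_div]
        rw [this]
        have hrt' : ∑ i, r i c = t c := rfl
        have hst' : ∑ k, s k c = t c := Finset.sum_comm
        rw [hrt', hst', mul_div_assoc, div_self h, mul_one]
    have h2 : ∑ c, ∑ i, ∑ k, (if t c = 0 then 0 else r i c * s k c / t c) = 1 := by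
      rw [← htot]
      exact Finset.sum_congr rfl fun c _ => h1 c
    simp only [Finset.sum_sub_distrib]
    have swap3 : ∀ q : ι → κ → γ → ℝ, ∑ i, ∑ k, ∑ c, q i k c = ∑ c, ∑ i, ∑ k, q i k c := by
      intro q
      calc ∑ i, ∑ k, ∑ c, q i k c = ∑ i, ∑ c, ∑ k, q i k c :=
            Finset.sum_congr rfl fun i _ => Finset.sum_comm
        _ = ∑ c, ∑ i, ∑ k, q i k c := Finset.sum_comm
    have hcomm := swap3 (fun i k c => if t c = 0 then 0 else r i c * s k c / t c)
    have hcomm2 := swap3 p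
    rw [hcomm, h2, hcomm2, htot, sub_self]
  have swap3 : ∀ q : ι → κ → γ → ℝ, ∑ i, ∑ k, ∑ c, q i k c = ∑ c, ∑ i, ∑ k, q i k c := by
    intro q
    calc ∑ i, ∑ k, ∑ c, q i k c = ∑ i, ∑ c, ∑ k, q i k c :=
          Finset.sum_congr rfl fun i _ => Finset.sum_comm
      _ = ∑ c, ∑ i, ∑ k, q i k c := Finset.sum_comm
  have P1 : ∑ i, ∑ k, ∑ c, p i k c * Real.log (r i c) = ∑ i, ∑ c, r i c * Real.log (r i c) := by
    refine Finset.sum_congr rfl fun i _ => ?_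
    rw [Finset.sum_comm]
    exact Finset.sum_congr rfl fun c _ => (Finset.sum_mul _ _ _).symm
  have P2 : ∑ i, ∑ k, ∑ c, p i k c * Real.log (s k c) = ∑ k, ∑ c, s k c * Real.log (s k c) := by
    rw [Finset.sum_comm]
    refine Finset.sum_congr rfl fun k _ => ?_
    rw [Finset.sum_comm]
    exact Finset.sum_congr rfl fun c _ => (Finset.sum_mul _ _ _).symm
  have P3 : ∑ i, ∑ k, ∑ c, p i k c * Real.log (t c) = ∑ c, t c * Real.log (t c) := by
    rw [swap3 (fun i k c => p i k c * Real.log (t c))]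
    refine Finset.sum_congr rfl fun c _ => ?_
    calc ∑ i, ∑ k, p i k c * Real.log (t c)
        = ∑ i, (∑ k, p i k c) * Real.log (t c) :=
          Finset.sum_congr rfl fun i _ => (Finset.sum_mul _ _ _).symm
      _ = (∑ i, ∑ k, p i k c) * Real.log (t c) := (Finset.sum_mul _ _ _).symm
  have LHSsplit : ∑ i, ∑ k, ∑ c, (Real.negMulLog (p i k c) + p i k c * Real.log (r i c)
      + p i k c * Real.log (s k c) - p i k c * Real.log (t c))
      = (∑ i, ∑ k, ∑ c, Real.negMulLog (p i k c))
        + (∑ i, ∑ c, r i c * Real.log (r i c)) + (∑ k, ∑ c, s k c * Real.log (s k c))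
        - ∑ c, t c * Real.log (t c) := by
    rw [← P1, ← P2, ← P3]
    simp only [Finset.sum_add_distrib, Finset.sum_sub_distrib]
  rw [LHSsplit, hRHS] at SUM
  have hR' : ∑ i, ∑ c, Real.negMulLog (r i c) = -∑ i, ∑ c, r i c * Real.log (r i c) := by
    simp [Real.negMulLog, neg_mul, Finset.sum_neg_distrib]
  have hS' : ∑ k, ∑ c, Real.negMulLog (s k c) = -∑ k, ∑ c, s k c * Real.log (s k c) := by
    simp [Real.negMulLog, neg_mul, Finset.sum_neg_distrib]
  have hT' : ∑ c, Real.negMulLog (t c) = -∑ c, t c * Real.log (t c) := by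
    simp [Real.negMulLog, neg_mul]
  rw [hR', hS', hT']
  linarith


section Ent

variable {X : Type*} [MeasurableSpace X] {μ : Measure X}

/-- Entropy of a finite family of sets. -/
def ent (μ : Measure X) {γ : Type*} [Fintype γ] (A : γ → Set X) : ℝ :=
  ∑ c, Real.negMulLog (μ (A c)).toReal

/-- Join of two families. -/
def pjoin {γ δ : Type*} (A : γ → Set X) (B : δ → Set X) : γ × δ → Set X :=
  fun p => A p.1 ∩ B p.2

lemma ent_comp_equiv {γ δ : Type*} [Fintype γ] [Fintype δ] (A : γ → Set X) (e : δ ≃ γ) :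
    ent μ (A ∘ e) = ent μ A :=
  Equiv.sum_comp e fun c => Real.negMulLog (μ (A c)).toReal

lemma measure_toReal_eq_sum_inter [IsProbabilityMeasure μ] {κ : Type*} [Fintype κ]
    {B : κ → Set X} (hB : IsPartition B) {S : Set X} (hS : MeasurableSet S) :
    (μ S).toReal = ∑ k, (μ (S ∩ B k)).toReal := by
  have h1 : S = ⋃ k, S ∩ B k := by
    rw [← Set.inter_iUnion, hB.2.2, Set.inter_univ]
  have h2 : μ S = ∑ k, μ (S ∩ B k) := by
    conv_lhs => rw [h1]
    rw [measure_iUnion ?_ fun k => hS.inter (hB.1 k), tsum_fintype]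
    intro k k' hkk'
    exact ((hB.2.1 hkk').mono inter_subset_right inter_subset_right).preimage _ |>.mono
      le_rfl le_rfl
  rw [h2, ENNReal.toReal_sum fun k _ => measure_ne_top μ _]

lemma sum_measure_toReal_eq_one [IsProbabilityMeasure μ] {κ : Type*} [Fintype κ]
    {B : κ → Set X} (hB : IsPartition B) : ∑ k, (μ (B k)).toReal = 1 := by
  have := measure_toReal_eq_sum_inter (μ := μ) hB MeasurableSet.univ
  simp only [Set.univ_inter] at this
  rw [← this, measure_univ, ENNReal.toReal_one]

lemma isPartition'_pjoin {γ δ : Type*} [Fintype γ] [Fintype δ] {A : γ → Set X} {B : δ → Set X}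
    (hA : IsPartition A) (hB : IsPartition B) : IsPartition (pjoin A B) := by
  refine ⟨fun p => (hA.1 p.1).inter (hB.1 p.2), ?_, ?_⟩
  · intro p q hpq
    have h : p.1 ≠ q.1 ∨ p.2 ≠ q.2 := by
      by_contra h
      push_neg at h
      exact hpq (Prod.ext h.1 h.2)
    rcases h with h | h
    · exact ((hA.2.1 h).mono Set.inter_subset_left Set.inter_subset_left : _)
    · exact ((hB.2.1 h).mono Set.inter_subset_right Set.inter_subset_right : _)
  · ext x
    simp only [Set.mem_iUnion, Set.mem_univ, iff_true]
    have hx1 : x ∈ ⋃ i, A i := hA.2.2.symm ▸ Set.mem_univ x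
    have hx2 : x ∈ ⋃ k, B k := hB.2.2.symm ▸ Set.mem_univ x
    obtain ⟨i, hi⟩ := Set.mem_iUnion.1 hx1
    obtain ⟨k, hk⟩ := Set.mem_iUnion.1 hx2
    exact ⟨(i, k), hi, hk⟩

lemma ent_le_ent_pjoin [IsProbabilityMeasure μ] {γ δ : Type*} [Fintype γ] [Fintype δ]
    {A : γ → Set X} {B : δ → Set X} (hA : ∀ i, MeasurableSet (A i)) (hB : IsPartition B) :
    ent μ A ≤ ent μ (pjoin A B) := by
  rw [ent, ent, Fintype.sum_prod_type]
  refine Finset.sum_le_sum fun i _ => ?_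
  rw [measure_toReal_eq_sum_inter hB (hA i)]
  exact negMulLog_sum_le _ _ fun k _ => ENNReal.toReal_nonneg

lemma ent_submodular [IsProbabilityMeasure μ] {γ δ ε : Type*} [Fintype γ] [Fintype δ] [Fintype ε]
    {A : γ → Set X} {B : δ → Set X} {C : ε → Set X}
    (hA : IsPartition A) (hB : IsPartition B) (hC : IsPartition C) :
    ent μ (pjoin (pjoin A B) C) + ent μ C ≤ ent μ (pjoin A C) + ent μ (pjoin B C) := by
  have key := gibbs_sum (fun i k c => (μ (A i ∩ B k ∩ C c)).toReal)
    (fun i k c => ENNReal.toReal_nonneg) ?htot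
  case htot =>
    have h1 : ∀ c, ∑ i : γ, ∑ k : δ, (μ (A i ∩ B k ∩ C c)).toReal = (μ (C c)).toReal := by
      intro c
      have : ∀ i, ∑ k : δ, (μ (A i ∩ B k ∩ C c)).toReal = (μ (A i ∩ C c)).toReal := by
        intro i
        rw [measure_toReal_eq_sum_inter hB ((hA.1 i).inter (hC.1 c))]
        exact Finset.sum_congr rfl fun k _ => by rw [Set.inter_right_comm]
      rw [Finset.sum_congr rfl fun i _ => this i]
      rw [measure_toReal_eq_sum_inter hA (hC.1 c)]
      exact Finset.sum_congr rfl fun i _ => by rw [Set.inter_comm (C c)]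
    rw [Finset.sum_congr rfl fun c _ => h1 c]
    exact sum_measure_toReal_eq_one hC
  have hr : ∀ i c, ∑ k : δ, (μ (A i ∩ B k ∩ C c)).toReal = (μ (A i ∩ C c)).toReal := by
    intro i c
    rw [measure_toReal_eq_sum_inter hB ((hA.1 i).inter (hC.1 c))]
    exact Finset.sum_congr rfl fun k _ => by rw [Set.inter_right_comm]
  have hs : ∀ k c, ∑ i : γ, (μ (A i ∩ B k ∩ C c)).toReal = (μ (B k ∩ C c)).toReal := by
    intro k c
    rw [measure_toReal_eq_sum_inter hA ((hB.1 k).inter (hC.1 c))]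
    exact Finset.sum_congr rfl fun i _ => by
      rw [Set.inter_comm (B k ∩ C c) (A i), ← Set.inter_assoc]
  have ht : ∀ c, ∑ i : γ, ∑ k : δ, (μ (A i ∩ B k ∩ C c)).toReal = (μ (C c)).toReal := by
    intro c
    rw [Finset.sum_congr rfl fun i _ => hr i c]
    rw [measure_toReal_eq_sum_inter hA (hC.1 c)]
    exact Finset.sum_congr rfl fun i _ => by rw [Set.inter_comm (C c)]
  have ht2 : ∀ c, ∑ i : γ, (μ (A i ∩ C c)).toReal = (μ (C c)).toReal := by
    intro c
    rw [measure_toReal_eq_sum_inter hA (hC.1 c)]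
    exact Finset.sum_congr rfl fun i _ => by rw [Set.inter_comm (C c)]
  simp only [fun i c => hr i c, fun k c => hs k c] at key
  simp only [fun c => ht2 c] at key
  calc ent μ (pjoin (pjoin A B) C) + ent μ C
      = (∑ i, ∑ k, ∑ c, Real.negMulLog (μ (A i ∩ B k ∩ C c)).toReal)
        + ∑ c, Real.negMulLog (μ (C c)).toReal := by
        congr 1
        rw [ent, Fintype.sum_prod_type, Fintype.sum_prod_type]
        rfl
    _ ≤ (∑ i, ∑ c, Real.negMulLog (μ (A i ∩ C c)).toReal)
        + ∑ k, ∑ c, Real.negMulLog (μ (B k ∩ C c)).toReal := key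
    _ = ent μ (pjoin A C) + ent μ (pjoin B C) := by
        rw [ent, ent, Fintype.sum_prod_type, Fintype.sum_prod_type]
        rfl

lemma ent_pjoin_comm {γ δ : Type*} [Fintype γ] [Fintype δ] (A : γ → Set X) (B : δ → Set X) :
    ent μ (pjoin A B) = ent μ (pjoin B A) := by
  unfold ent pjoin
  exact Fintype.sum_equiv (Equiv.prodComm γ δ) _ _ fun p => by
    simp [Set.inter_comm]

lemma ent_pjoin_le_add [IsProbabilityMeasure μ] {γ δ : Type*} [Fintype γ] [Fintype δ]
    {A : γ → Set X} {B : δ → Set X} (hA : IsPartition A) (hB : IsPartition B) :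
    ent μ (pjoin A B) ≤ ent μ A + ent μ B := by
  have htriv : IsPartition (fun _ : Unit => (Set.univ : Set X)) :=
    ⟨fun _ => MeasurableSet.univ, Subsingleton.pairwise, Set.iUnion_const _⟩
  have h := ent_submodular (μ := μ) hA hB htriv
  have e1 : ent μ (pjoin A (fun _ : Unit => (Set.univ : Set X))) = ent μ A := by
    simp [ent, pjoin, Fintype.sum_prod_type, Set.inter_univ]
  have e2 : ent μ (pjoin B (fun _ : Unit => (Set.univ : Set X))) = ent μ B := by
    simp [ent, pjoin, Fintype.sum_prod_type, Set.inter_univ]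
  have e3 : ent μ (fun _ : Unit => (Set.univ : Set X)) = 0 := by
    simp [ent]
  have e4 : ent μ (pjoin (pjoin A B) (fun _ : Unit => (Set.univ : Set X)))
      = ent μ (pjoin A B) := by
    simp [ent, pjoin, Fintype.sum_prod_type, Set.inter_univ]
  rw [e1, e2, e3, e4] at h
  linarith

end Ent

section JoinLayer

variable {X : Type*} [MeasurableSpace X] {μ : Measure X} {T : X → X}
variable {ι κ : Type*} [Fintype ι] [Fintype κ] {P : ι → Set X} {Q : κ → Set X}
variable {f : ℕ → ℕ}

/-- The atoms of the join of the partitions `T^[f i] ⁻¹' P` over `i ∈ F`. -/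
def JF (T : X → X) (P : ι → Set X) (f : ℕ → ℕ) (F : Finset ℕ) : (F → ι) → Set X :=
  fun ω => ⋂ i : F, T^[f i.1] ⁻¹' P (ω i)

lemma finJoinEnt_eq_ent (μ : Measure X) (T : X → X) (P : ι → Set X) (f : ℕ → ℕ)
    (F : Finset ℕ) : finJoinEnt μ T P f F = ent μ (JF T P f F) := rfl

lemma isPartition_JF (hT : Measurable T) (hP : IsPartition P) (f : ℕ → ℕ) (F : Finset ℕ) :
    IsPartition (JF T P f F) := by
  refine ⟨fun ω => MeasurableSet.iInter fun i => (hP.1 (ω i)).preimage (hT.iterate (f i.1)),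
    ?_, ?_⟩
  · intro ω ω' hne
    obtain ⟨i, hi⟩ := Function.ne_iff.1 hne
    refine Set.disjoint_left.2 fun x hx hx' => ?_
    have h1 : T^[f i.1] x ∈ P (ω i) := by
      have := Set.mem_iInter.1 hx i; exact this
    have h2 : T^[f i.1] x ∈ P (ω' i) := by
      have := Set.mem_iInter.1 hx' i; exact this
    exact Set.disjoint_left.1 (hP.2.1 hi) h1 h2
  · ext x
    simp only [Set.mem_iUnion, Set.mem_univ, iff_true]
    have hcov : ∀ y : X, ∃ i, y ∈ P i := fun y => Set.mem_iUnion.1 (hP.2.2.symm ▸ Set.mem_univ y)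
    choose g hg using hcov
    exact ⟨fun i => g (T^[f i.1] x), Set.mem_iInter.2 fun i => hg _⟩

/-- Reindexing equivalence for a disjoint union of finsets. -/
def unionEquiv {F G : Finset ℕ} (h : Disjoint F G) (ι : Type*) :
    ((F ∪ G : Finset ℕ) → ι) ≃ (F → ι) × (G → ι) where
  toFun ω := (fun i => ω ⟨i.1, Finset.mem_union_left _ i.2⟩,
              fun i => ω ⟨i.1, Finset.mem_union_right _ i.2⟩)
  invFun p i := if h' : i.1 ∈ F then p.1 ⟨i.1, h'⟩
    else p.2 ⟨i.1, (Finset.mem_union.1 i.2).resolve_left h'⟩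
  left_inv ω := by
    funext i
    by_cases h' : i.1 ∈ F
    · simp only [dif_pos h']
    · simp only [dif_neg h']
  right_inv p := by
    refine Prod.ext (funext fun i => ?_) (funext fun i => ?_)
    · exact dif_pos i.2
    · have hni : i.1 ∉ F := fun hmem => (Finset.disjoint_left.1 h hmem) i.2
      exact dif_neg hni

lemma atom_union {F G : Finset ℕ} (h : Disjoint F G) :
    JF T P f (F ∪ G) = (pjoin (JF T P f F) (JF T P f G)) ∘ (unionEquiv h ι) := by
  funext ω
  ext x
  simp only [JF, pjoin, Function.comp_apply, unionEquiv, Equiv.coe_fn_mk, Set.mem_iInter,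
    Set.mem_inter_iff, Set.mem_preimage]
  constructor
  · intro hx
    exact ⟨fun i => hx ⟨i.1, Finset.mem_union_left _ i.2⟩,
           fun i => hx ⟨i.1, Finset.mem_union_right _ i.2⟩⟩
  · rintro ⟨h1, h2⟩ i
    rcases Finset.mem_union.1 i.2 with hi | hi
    · exact h1 ⟨i.1, hi⟩
    · exact h2 ⟨i.1, hi⟩

lemma finJoinEnt_union {F G : Finset ℕ} (h : Disjoint F G) :
    finJoinEnt μ T P f (F ∪ G) = ent μ (pjoin (JF T P f F) (JF T P f G)) := by
  rw [finJoinEnt_eq_ent, atom_union h, ent_comp_equiv]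

lemma finJoinEnt_union_le [IsProbabilityMeasure μ] (hT : Measurable T) (hP : IsPartition P)
    {F G : Finset ℕ} (h : Disjoint F G) :
    finJoinEnt μ T P f (F ∪ G) ≤ finJoinEnt μ T P f F + finJoinEnt μ T P f G := by
  rw [finJoinEnt_union h]
  exact ent_pjoin_le_add (isPartition_JF hT hP f F) (isPartition_JF hT hP f G)

lemma le_finJoinEnt_union [IsProbabilityMeasure μ] (hT : Measurable T) (hP : IsPartition P)
    {F G : Finset ℕ} (h : Disjoint F G) :
    finJoinEnt μ T P f F ≤ finJoinEnt μ T P f (F ∪ G) := by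
  rw [finJoinEnt_union h]
  exact ent_le_ent_pjoin (isPartition_JF hT hP f F).1 (isPartition_JF hT hP f G)

lemma finJoinEnt_submod [IsProbabilityMeasure μ] (hT : Measurable T) (hP : IsPartition P)
    {F G H : Finset ℕ} (hFG : Disjoint F G) (hFH : Disjoint F H) (hGH : Disjoint G H) :
    finJoinEnt μ T P f (F ∪ G ∪ H) + finJoinEnt μ T P f H
      ≤ finJoinEnt μ T P f (F ∪ H) + finJoinEnt μ T P f (G ∪ H) := by
  have hFG_H : Disjoint (F ∪ G) H := Finset.disjoint_union_left.2 ⟨hFH, hGH⟩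
  rw [finJoinEnt_union hFG_H, finJoinEnt_union hFH, finJoinEnt_union hGH]
  have e1 : pjoin (JF T P f (F ∪ G)) (JF T P f H)
      = (pjoin (pjoin (JF T P f F) (JF T P f G)) (JF T P f H))
          ∘ (Equiv.prodCongr (unionEquiv hFG ι) (Equiv.refl _)) := by
    rw [atom_union hFG]; rfl
  rw [e1, ent_comp_equiv]
  exact ent_submodular (μ := μ) (isPartition_JF hT hP f F) (isPartition_JF hT hP f G)
    (isPartition_JF hT hP f H)

lemma finJoinEnt_singleton [IsProbabilityMeasure μ] (hT : MeasurePreserving T μ μ)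
    (hP : IsPartition P) (j : ℕ) : finJoinEnt μ T P f {j} = ent μ P := by
  haveI : Unique (↥({j} : Finset ℕ)) :=
    ⟨⟨⟨j, Finset.mem_singleton_self j⟩⟩, fun a => Subtype.ext (Finset.mem_singleton.1 a.2)⟩
  rw [finJoinEnt_eq_ent,
    ← ent_comp_equiv (JF T P f {j}) (Equiv.funUnique (↥({j} : Finset ℕ)) ι).symm]
  unfold ent
  refine Finset.sum_congr rfl fun i _ => ?_
  congr 1
  have hset : (JF T P f {j} ∘ (Equiv.funUnique (↥({j} : Finset ℕ)) ι).symm) i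
      = T^[f j] ⁻¹' P i := by
    show (⋂ k : ↥({j} : Finset ℕ), T^[f k.1] ⁻¹' P i) = _
    refine le_antisymm (Set.iInter_subset (fun k : ↥({j} : Finset ℕ) => T^[f k.1] ⁻¹' P i) ⟨j, Finset.mem_singleton_self j⟩) ?_
    refine Set.subset_iInter fun k => ?_
    have hk : k = (⟨j, Finset.mem_singleton_self j⟩ : ↥({j} : Finset ℕ)) :=
      Subtype.ext (Finset.mem_singleton.1 k.2)
    rw [hk]
  rw [hset, (hT.iterate (f j)).measure_preimage (hP.1 i).nullMeasurableSet]

lemma finJoinEnt_empty [IsProbabilityMeasure μ] :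
    finJoinEnt μ T P f (∅ : Finset ℕ) = 0 := by
  rw [finJoinEnt_eq_ent, ent]
  refine Finset.sum_eq_zero fun ω _ => ?_
  haveI : IsEmpty (↥(∅ : Finset ℕ)) := ⟨fun i => Finset.notMem_empty i.1 i.2⟩
  have h : JF T P f ∅ ω = Set.univ := Set.iInter_of_empty _
  rw [h, measure_univ, ENNReal.toReal_one, Real.negMulLog_one]

lemma finJoinEnt_comp (g : ℕ → ℕ) (F : Finset ℕ) (hg : Set.InjOn g F) :
    finJoinEnt μ T P (f ∘ g) F = finJoinEnt μ T P f (F.image g) := by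
  have hbij : Function.Bijective (fun i : F => (⟨g i.1, Finset.mem_image_of_mem g i.2⟩ :
      ↥(F.image g))) := by
    constructor
    · intro a b hab
      exact Subtype.ext (hg a.2 b.2 (Subtype.ext_iff.1 hab))
    · rintro ⟨j, hj⟩
      obtain ⟨i, hi, hij⟩ := Finset.mem_image.1 hj
      exact ⟨⟨i, hi⟩, Subtype.ext hij⟩
  let e : (F : Finset ℕ) ≃ ↥(F.image g) := Equiv.ofBijective _ hbij
  have hatom : JF T P (f ∘ g) F
      = (JF T P f (F.image g)) ∘ (Equiv.arrowCongr e (Equiv.refl ι)) := by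
    funext ω
    ext x
    simp only [JF, Function.comp_apply, Equiv.arrowCongr_apply, Equiv.coe_refl,
      Set.mem_iInter, Set.mem_preimage, Function.comp]
    constructor
    · intro hx j
      have hi := hx (e.symm j)
      have hj1 : g ((e.symm j).1) = j.1 := by
        have h2 := e.apply_symm_apply j
        exact congrArg Subtype.val h2
      rw [hj1] at hi
      exact hi
    · intro hx i
      have hj := hx (e i)
      rw [e.symm_apply_apply] at hj
      exact hj
  rw [finJoinEnt_eq_ent, finJoinEnt_eq_ent, hatom, ent_comp_equiv]

lemma atom_prod (F : Finset ℕ) :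
    JF T (fun p : ι × κ => P p.1 ∩ Q p.2) f F
      = (pjoin (JF T P f F) (JF T Q f F)) ∘ (Equiv.arrowProdEquivProdArrow F (fun _ => ι) (fun _ => κ)) := by
  funext ω
  ext x
  simp only [JF, pjoin, Function.comp_apply, Equiv.arrowProdEquivProdArrow, Equiv.coe_fn_mk,
    Set.mem_iInter, Set.mem_inter_iff, Set.mem_preimage]
  constructor
  · intro hx
    exact ⟨fun i => (hx i).1, fun i => (hx i).2⟩
  · rintro ⟨h1, h2⟩ i
    exact ⟨h1 i, h2 i⟩

lemma finJoinEnt_prod_eq (F : Finset ℕ) :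
    finJoinEnt μ T (fun p : ι × κ => P p.1 ∩ Q p.2) f F
      = ent μ (pjoin (JF T P f F) (JF T Q f F)) := by
  rw [finJoinEnt_eq_ent, atom_prod, ent_comp_equiv]

lemma finJoinEnt_prod_le [IsProbabilityMeasure μ] (hT : Measurable T) (hP : IsPartition P)
    (hQ : IsPartition Q) (F : Finset ℕ) :
    finJoinEnt μ T (fun p : ι × κ => P p.1 ∩ Q p.2) f F
      ≤ finJoinEnt μ T P f F + finJoinEnt μ T Q f F := by
  rw [finJoinEnt_prod_eq]
  exact ent_pjoin_le_add (isPartition_JF hT hP f F) (isPartition_JF hT hQ f F)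

lemma left_le_finJoinEnt_prod [IsProbabilityMeasure μ] (hT : Measurable T) (hP : IsPartition P)
    (hQ : IsPartition Q) (F : Finset ℕ) :
    finJoinEnt μ T P f F
      ≤ finJoinEnt μ T (fun p : ι × κ => P p.1 ∩ Q p.2) f F := by
  rw [finJoinEnt_prod_eq]
  exact ent_le_ent_pjoin (isPartition_JF hT hP f F).1 (isPartition_JF hT hQ f F)

lemma right_le_finJoinEnt_prod [IsProbabilityMeasure μ] (hT : Measurable T) (hP : IsPartition P)
    (hQ : IsPartition Q) (F : Finset ℕ) :
    finJoinEnt μ T Q f F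
      ≤ finJoinEnt μ T (fun p : ι × κ => P p.1 ∩ Q p.2) f F := by
  rw [finJoinEnt_prod_eq, ent_pjoin_comm]
  exact ent_le_ent_pjoin (isPartition_JF hT hQ f F).1 (isPartition_JF hT hP f F)

end JoinLayer

section SeqLayer

variable {X : Type*} [MeasurableSpace X] {μ : Measure X} {T : X → X}
variable {ι : Type*} [Fintype ι] {P : ι → Set X} {s : ℕ → ℕ}

lemma ent_nonneg [IsProbabilityMeasure μ] {γ : Type*} [Fintype γ] (A : γ → Set X) :
    0 ≤ ent μ A := by
  refine Finset.sum_nonneg fun c _ => Real.negMulLog_nonneg ENNReal.toReal_nonneg ?_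
  have h1 : μ (A c) ≤ 1 := prob_le_one
  calc (μ (A c)).toReal ≤ (1 : ℝ≥0∞).toReal := ENNReal.toReal_mono ENNReal.one_ne_top h1
    _ = 1 := ENNReal.toReal_one

lemma seqJoinEnt_zero (μ : Measure X) [IsProbabilityMeasure μ] (T : X → X) (P : ι → Set X)
    (s : ℕ → ℕ) : seqJoinEnt μ T P s 0 = 0 := by
  rw [seqJoinEnt, Finset.range_zero, finJoinEnt_empty]

lemma range_succ_eq (n : ℕ) : Finset.range (n + 1) = {n} ∪ Finset.range n := by
  rw [Finset.range_add_one, Finset.insert_eq]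

lemma disj_singleton_range (n : ℕ) : Disjoint ({n} : Finset ℕ) (Finset.range n) :=
  Finset.disjoint_singleton_left.2 (by simp)

lemma seqJoinEnt_mono [IsProbabilityMeasure μ] (hT : Measurable T) (hP : IsPartition P)
    (n : ℕ) : seqJoinEnt μ T P s n ≤ seqJoinEnt μ T P s (n + 1) := by
  rw [seqJoinEnt, seqJoinEnt, range_succ_eq, Finset.union_comm]
  exact le_finJoinEnt_union hT hP (disj_singleton_range n).symm

lemma seqJoinEnt_succ_le [IsProbabilityMeasure μ] (hT : MeasurePreserving T μ μ)
    (hP : IsPartition P) (n : ℕ) :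
    seqJoinEnt μ T P s (n + 1) ≤ seqJoinEnt μ T P s n + ent μ P := by
  rw [seqJoinEnt, seqJoinEnt, range_succ_eq]
  calc finJoinEnt μ T P s ({n} ∪ Finset.range n)
      ≤ finJoinEnt μ T P s {n} + finJoinEnt μ T P s (Finset.range n) :=
        finJoinEnt_union_le hT.measurable hP (disj_singleton_range n)
    _ = seqJoinEnt μ T P s n + ent μ P := by
        rw [finJoinEnt_singleton hT hP n, add_comm]; rfl

lemma seqJoinEnt_le [IsProbabilityMeasure μ] (hT : MeasurePreserving T μ μ)
    (hP : IsPartition P) (n : ℕ) : seqJoinEnt μ T P s n ≤ n * ent μ P := by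
  induction n with
  | zero => simp [seqJoinEnt_zero]
  | succ n ih =>
    have := seqJoinEnt_succ_le (μ := μ) (s := s) hT hP n
    push_cast
    linarith

lemma seqJoinEnt_div_le [IsProbabilityMeasure μ] (hT : MeasurePreserving T μ μ)
    (hP : IsPartition P) (n : ℕ) :
    seqJoinEnt μ T P s n / n ≤ max (ent μ P) 0 := by
  rcases Nat.eq_zero_or_pos n with h | h
  · subst h; simp [seqJoinEnt_zero]
  · have hn : (0 : ℝ) < n := by exact_mod_cast h
    rw [div_le_iff₀ hn]
    calc seqJoinEnt μ T P s n ≤ n * ent μ P := seqJoinEnt_le hT hP n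
      _ ≤ n * max (ent μ P) 0 := by
          exact mul_le_mul_of_nonneg_left (le_max_left _ _) hn.le
      _ = max (ent μ P) 0 * n := mul_comm _ _

lemma seqJoinEnt_nonneg [IsProbabilityMeasure μ] (hT : Measurable T) (hP : IsPartition P)
    (n : ℕ) : 0 ≤ seqJoinEnt μ T P s n := by
  induction n with
  | zero => simp [seqJoinEnt_zero]
  | succ n ih => exact ih.trans (seqJoinEnt_mono hT hP n)

/-- Key construction: from linear entropy growth along an infinite set of times
(together with largeness of the dimension expression there), extract an entropy
generating subsequence with a positive dimension expression at `τ`. -/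
lemma exists_entGen_subseq [IsProbabilityMeasure μ] (hT : MeasurePreserving T μ μ)
    (hP : IsPartition P) (hs : IsPosSeq s) {c : ℝ} (hc : 0 < c) {τ : ℝ} (hτ : 0 ≤ τ)
    {a : ℝ≥0∞} (ha0 : 0 < a)
    (hM : {n : ℕ | c * n ≤ seqJoinEnt μ T P s n
        ∧ a < ((n : ℝ≥0∞) + 1) / (s n : ℝ≥0∞) ^ τ}.Infinite) :
    ∃ s' : ℕ → ℕ, IsEntGenSeq μ T P s' ∧ 0 < dimExprSup s' τ := by
  classical
  set E : ℕ → ℝ := fun i => seqJoinEnt μ T P s (i + 1) - seqJoinEnt μ T P s i with hE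
  set GP : ℕ → Prop := fun i => c / 2 ≤ E i with hGP
  have hEnonneg : ∀ i, 0 ≤ E i := fun i =>
    sub_nonneg.2 (seqJoinEnt_mono hT.measurable hP i)
  have hEle : ∀ i, E i ≤ ent μ P := fun i =>
    sub_le_iff_le_add'.2 (seqJoinEnt_succ_le hT hP i)
  have hsum : ∀ n, seqJoinEnt μ T P s n = ∑ i ∈ Finset.range n, E i := by
    intro n
    rw [Finset.sum_range_sub (f := fun i => seqJoinEnt μ T P s i), seqJoinEnt_zero, sub_zero]
  set L : ℝ := ent μ P + 1 with hLdef
  have hL : 0 < L := by have := ent_nonneg (μ := μ) P; linarith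
  set δ : ℝ := c / (2 * L) with hδdef
  have hδ : 0 < δ := div_pos hc (by linarith)
  -- counting lemma
  have hcount : ∀ n, c * n ≤ seqJoinEnt μ T P s n → δ * n ≤ Nat.count GP n := by
    intro n hn
    have h1 : c * n ≤ ∑ i ∈ Finset.range n, E i := by rw [← hsum]; exact hn
    have hsplit : ∑ i ∈ Finset.range n, E i
        = ∑ i ∈ (Finset.range n).filter GP, E i
          + ∑ i ∈ (Finset.range n).filter (fun i => ¬ GP i), E i :=
      (Finset.sum_filter_add_sum_filter_not _ _ _).symm
    have h2 : ∑ i ∈ (Finset.range n).filter GP, E i ≤ (Nat.count GP n) * L := by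
      rw [Nat.count_eq_card_filter_range]
      calc ∑ i ∈ (Finset.range n).filter GP, E i
          ≤ ((Finset.range n).filter GP).card • L :=
            Finset.sum_le_card_nsmul _ _ _ fun i _ => by
              have := hEle i; linarith
        _ = (((Finset.range n).filter GP).card : ℝ) * L := nsmul_eq_mul _ _
    have h3 : ∑ i ∈ (Finset.range n).filter (fun i => ¬ GP i), E i ≤ n * (c / 2) := by
      calc ∑ i ∈ (Finset.range n).filter (fun i => ¬ GP i), E i
          ≤ ((Finset.range n).filter (fun i => ¬ GP i)).card • (c / 2) :=
            Finset.sum_le_card_nsmul _ _ _ fun i hi => by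
              have := (Finset.mem_filter.1 hi).2
              simp only [hGP, not_le] at this
              linarith
        _ = (((Finset.range n).filter (fun i => ¬ GP i)).card : ℝ) * (c / 2) := nsmul_eq_mul _ _
        _ ≤ n * (c / 2) := by
            refine mul_le_mul_of_nonneg_right ?_ (by linarith)
            exact_mod_cast (Finset.card_filter_le _ _).trans_eq (Finset.card_range n)
    have h4 : (c / 2) * n ≤ (Nat.count GP n) * L := by linarith
    rw [hδdef, div_mul_eq_mul_div, div_le_iff₀ (by linarith : (0:ℝ) < 2 * L)]
    calc c * n = (c / 2) * n * 2 := by ring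
      _ ≤ (Nat.count GP n) * L * 2 := by linarith
      _ = (Nat.count GP n) * (2 * L) := by ring
  -- GP is infinite
  have hGPinf : (setOf GP).Infinite := by
    by_contra hfin
    rw [Set.not_infinite] at hfin
    obtain ⟨N, hN⟩ := exists_nat_gt ((hfin.toFinset.card : ℝ) / δ)
    obtain ⟨n, hnM, hn⟩ := hM.exists_gt N
    have hδn : δ * n ≤ Nat.count GP n := hcount n hnM.1
    have hcard : Nat.count GP n ≤ hfin.toFinset.card := Nat.count_le_card hfin n
    have : (hfin.toFinset.card : ℝ) < δ * n := by
      rw [div_lt_iff₀ hδ] at hN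
      calc (hfin.toFinset.card : ℝ) < N * δ := hN
        _ ≤ n * δ := by
            refine mul_le_mul_of_nonneg_right ?_ hδ.le
            exact_mod_cast hn.le
        _ = δ * n := mul_comm _ _
    have : (hfin.toFinset.card : ℝ) < Nat.count GP n := lt_of_lt_of_le this hδn
    exact absurd (by exact_mod_cast hcard) (not_le.2 this)
  set s' : ℕ → ℕ := s ∘ Nat.nth GP with hs'def
  have hs' : IsPosSeq s' :=
    ⟨hs.1.comp (Nat.nth_strictMono hGPinf),
     lt_of_lt_of_le hs.2 (hs.1.monotone (Nat.zero_le _))⟩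
  have himg : ∀ m, seqJoinEnt μ T P s' m
      = finJoinEnt μ T P s ((Finset.range m).image (Nat.nth GP)) := by
    intro m
    rw [seqJoinEnt, hs'def]
    exact finJoinEnt_comp (Nat.nth GP) (Finset.range m)
      ((Nat.nth_injective hGPinf).injOn)
  -- entropy increments along the subsequence
  have hstep : ∀ k, c / 2 ≤ seqJoinEnt μ T P s' (k + 1) - seqJoinEnt μ T P s' k := by
    intro k
    set j := Nat.nth GP k with hj
    set Gk := (Finset.range k).image (Nat.nth GP) with hGk
    have hGksub : Gk ⊆ Finset.range j := by
      intro x hx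
      obtain ⟨i, hi, rfl⟩ := Finset.mem_image.1 hx
      rw [Finset.mem_range] at hi ⊢
      exact Nat.nth_lt_nth hGPinf |>.2 hi
    have himg2 : (Finset.range (k + 1)).image (Nat.nth GP) = {j} ∪ Gk := by
      rw [Finset.range_add_one, Finset.image_insert, Finset.insert_eq]
    set G' := Finset.range j \ Gk with hG'
    have hjG' : Disjoint ({j} : Finset ℕ) G' := by
      refine Finset.disjoint_singleton_left.2 fun hmem => ?_
      exact absurd (Finset.mem_sdiff.1 hmem).1 (by simp)
    have hjGk : Disjoint ({j} : Finset ℕ) Gk := by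
      refine Finset.disjoint_singleton_left.2 fun hmem => ?_
      have := hGksub hmem
      simp at this
    have hG'Gk : Disjoint G' Gk := Finset.sdiff_disjoint
    have hsub := finJoinEnt_submod (μ := μ) (f := s) hT.measurable hP hjG' hjGk hG'Gk
    have hGG : G' ∪ Gk = Finset.range j := Finset.sdiff_union_of_subset hGksub
    have hunion : {j} ∪ G' ∪ Gk = Finset.range (j + 1) := by
      rw [Finset.union_assoc, hGG, range_succ_eq]
    rw [hunion, hGG] at hsub
    have hEj : c / 2 ≤ E j := Nat.nth_mem_of_infinite hGPinf k
    have e1 : seqJoinEnt μ T P s' (k + 1) = finJoinEnt μ T P s ({j} ∪ Gk) := by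
      rw [himg (k + 1), himg2]
    have e2 : seqJoinEnt μ T P s' k = finJoinEnt μ T P s Gk := himg k
    have e3 : finJoinEnt μ T P s (Finset.range (j + 1)) = seqJoinEnt μ T P s (j + 1) := rfl
    have e4 : finJoinEnt μ T P s (Finset.range j) = seqJoinEnt μ T P s j := rfl
    rw [e3, e4] at hsub
    rw [e1, e2]
    have : E j ≤ finJoinEnt μ T P s ({j} ∪ Gk) - finJoinEnt μ T P s Gk := by
      rw [hE]
      dsimp only
      linarith
    linarith
  have hgrow : ∀ k, c / 2 * k ≤ seqJoinEnt μ T P s' k := by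
    intro k
    induction k with
    | zero => simp [seqJoinEnt_zero]
    | succ k ih =>
      have := hstep k
      push_cast
      linarith
  refine ⟨s', ⟨hs', ?_⟩, ?_⟩
  · -- liminf positivity
    have hb : IsBoundedUnder (· ≤ ·) atTop (fun n => seqJoinEnt μ T P s' n / n) :=
      isBoundedUnder_of ⟨max (ent μ P) 0, fun n => seqJoinEnt_div_le hT hP n⟩
    have hev : ∀ᶠ k in atTop, c / 2 ≤ seqJoinEnt μ T P s' k / k := by
      filter_upwards [eventually_ge_atTop 1] with k hk
      have hk' : (0 : ℝ) < k := by exact_mod_cast hk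
      rw [le_div_iff₀ hk']
      exact hgrow k
    have := le_liminf_of_le hb.isCoboundedUnder_ge hev
    linarith
  · -- dimension expression positivity
    set d := ENNReal.ofReal (δ / 2) with hd
    have hd0 : d ≠ 0 := by
      rw [hd, Ne, ENNReal.ofReal_eq_zero, not_le]
      linarith
    set ε := d * a with hε
    have hεpos : 0 < ε := ENNReal.mul_pos hd0 ha0.ne'
    have hfreq : ∃ᶠ k : ℕ in atTop, ε ≤ ((k : ℝ≥0∞) + 1) / (s' k : ℝ≥0∞) ^ τ := by
      rw [Filter.frequently_atTop]
      intro m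
      obtain ⟨N1, hN1⟩ := exists_nat_gt ((m + 1 : ℝ) / δ)
      obtain ⟨n, hnM, hn⟩ := hM.exists_gt (max N1 1)
      have hn1 : 1 ≤ n := lt_of_le_of_lt (le_max_right N1 1) hn |>.le
      have hnN1 : N1 < n := lt_of_le_of_lt (le_max_left N1 1) hn
      set k := Nat.count GP n with hk
      have hδn : δ * n ≤ k := hcount n hnM.1
      have hkm : m + 1 ≤ k := by
        have h5 : (m + 1 : ℝ) < δ * n := by
          rw [div_lt_iff₀ hδ] at hN1
          calc (m + 1 : ℝ) < N1 * δ := hN1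
            _ ≤ n * δ := by
                refine mul_le_mul_of_nonneg_right ?_ hδ.le
                exact_mod_cast hnN1.le
            _ = δ * n := mul_comm _ _
        have : (m + 1 : ℝ) < k := lt_of_lt_of_le h5 hδn
        exact_mod_cast this.le
      have hk1 : 1 ≤ k := le_trans (by omega) hkm
      refine ⟨k - 1, by omega, ?_⟩
      have hk2 : k - 1 + 1 = k := by omega
      have hnth : Nat.nth GP (k - 1) < n := Nat.nth_lt_of_lt_count (by omega)
      have hsle : s (Nat.nth GP (k - 1)) ≤ s n := hs.1.monotone hnth.le
      -- numerator inequality in ℝ≥0∞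
      have hnum : d * ((n : ℝ≥0∞) + 1) ≤ (k : ℝ≥0∞) := by
        have hreal : (δ / 2) * ((n : ℝ) + 1) ≤ (k : ℝ) := by
          have : (δ / 2) * ((n : ℝ) + 1) ≤ δ * n := by
            have hn' : (1 : ℝ) ≤ n := by exact_mod_cast hn1
            nlinarith
          linarith [hδn]
        calc d * ((n : ℝ≥0∞) + 1) = ENNReal.ofReal ((δ / 2) * ((n : ℝ) + 1)) := by
              rw [hd, ENNReal.ofReal_mul (by linarith : (0:ℝ) ≤ δ / 2)]
              congr 1
              rw [ENNReal.ofReal_add (by positivity) zero_le_one, ENNReal.ofReal_natCast,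
                ENNReal.ofReal_one]
          _ ≤ ENNReal.ofReal (k : ℝ) := ENNReal.ofReal_le_ofReal hreal
          _ = (k : ℝ≥0∞) := ENNReal.ofReal_natCast k
      have hden : ((s' (k - 1) : ℕ) : ℝ≥0∞) ^ τ ≤ ((s n : ℕ) : ℝ≥0∞) ^ τ := by
        refine ENNReal.rpow_le_rpow ?_ hτ
        exact_mod_cast hsle
      calc ε = d * a := hε
        _ ≤ d * (((n : ℝ≥0∞) + 1) / (s n : ℝ≥0∞) ^ τ) :=
            mul_le_mul_right hnM.2.le d
        _ = (d * ((n : ℝ≥0∞) + 1)) / (s n : ℝ≥0∞) ^ τ := (mul_div_assoc _ _ _).symm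
        _ ≤ (k : ℝ≥0∞) / (s' (k - 1) : ℝ≥0∞) ^ τ := ENNReal.div_le_div hnum hden
        _ = (((k - 1 : ℕ) : ℝ≥0∞) + 1) / (s' (k - 1) : ℝ≥0∞) ^ τ := by
            congr 1
            have hcast : ((k - 1 : ℕ) : ℝ≥0∞) + 1 = ((k - 1 + 1 : ℕ) : ℝ≥0∞) := by
              push_cast; ring
            rw [hcast, hk2]
    exact lt_of_lt_of_le hεpos (le_limsup_of_frequently_le' hfreq)

end SeqLayer

open scoped Topology


lemma liminf_pos_of_le {u v : ℕ → ℝ} (hu0 : ∀ n, 0 ≤ u n) (huv : ∀ n, u n ≤ v n)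
    (hv : ∃ b, ∀ n, v n ≤ b) (h : 0 < Filter.atTop.liminf u) :
    0 < Filter.atTop.liminf v := by
  obtain ⟨b, hb⟩ := hv
  have hub : IsBoundedUnder (· ≥ ·) atTop u :=
    isBoundedUnder_of ⟨0, fun n => hu0 n⟩
  obtain ⟨c0, hc0, hlt⟩ := exists_between h
  have hev : ∀ᶠ n in atTop, c0 < u n :=
    eventually_lt_of_lt_liminf hlt hub
  have hvb : IsBoundedUnder (· ≤ ·) atTop v := isBoundedUnder_of ⟨b, hb⟩
  have hle : c0 ≤ Filter.atTop.liminf v :=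
    le_liminf_of_le hvb.isCoboundedUnder_ge (hev.mono fun n hn => hn.le.trans (huv n))
  linarith

section DimLayer

variable {s : ℕ → ℕ}

lemma isPosSeq_ge (hs : IsPosSeq s) : ∀ n, n + 1 ≤ s n := by
  intro n
  induction n with
  | zero => exact hs.2
  | succ n ih => exact lt_of_le_of_lt ih (hs.1 (lt_add_one n))

lemma one_le_cast_s (hs : IsPosSeq s) (n : ℕ) : (1 : ℝ≥0∞) ≤ (s n : ℝ≥0∞) := by
  have := isPosSeq_ge hs n
  exact_mod_cast Nat.one_le_iff_ne_zero.2 (by omega)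

lemma dimExprSup_two (hs : IsPosSeq s) : dimExprSup s 2 = 0 := by
  rw [dimExprSup]
  have htend : Tendsto (fun n : ℕ => ((n : ℝ≥0∞) + 1) / (s n : ℝ≥0∞) ^ (2 : ℝ)) atTop (𝓝 0) := by
    have hup : Tendsto (fun n : ℕ => ((n : ℝ≥0∞))⁻¹) atTop (𝓝 0) :=
      ENNReal.tendsto_inv_nat_nhds_zero
    refine tendsto_of_tendsto_of_tendsto_of_le_of_le' tendsto_const_nhds hup
      (Eventually.of_forall fun n => zero_le) (Eventually.of_forall fun n => ?_)
    have h1 : ((n : ℝ≥0∞) + 1) ^ (2 : ℝ) ≤ (s n : ℝ≥0∞) ^ (2 : ℝ) := by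
      refine ENNReal.rpow_le_rpow ?_ (by norm_num)
      have := isPosSeq_ge hs n
      calc ((n : ℝ≥0∞) + 1) = ((n + 1 : ℕ) : ℝ≥0∞) := by push_cast; ring
        _ ≤ (s n : ℝ≥0∞) := by exact_mod_cast this
    have h2 : ((n : ℝ≥0∞) + 1) / ((n : ℝ≥0∞) + 1) ^ (2 : ℝ) = ((n : ℝ≥0∞) + 1)⁻¹ := by
      have hpow : ((n : ℝ≥0∞) + 1) ^ (2 : ℝ) = ((n : ℝ≥0∞) + 1) * ((n : ℝ≥0∞) + 1) := by
        rw [show (2 : ℝ) = ((2 : ℕ) : ℝ) by norm_num, ENNReal.rpow_natCast, sq]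
      rw [hpow]
      have hne : ((n : ℝ≥0∞) + 1) ≠ 0 := by simp
      have hnt : ((n : ℝ≥0∞) + 1) ≠ ⊤ := by
        refine ENNReal.add_ne_top.2 ⟨ENNReal.natCast_ne_top n, ENNReal.one_ne_top⟩
      calc ((n : ℝ≥0∞) + 1) / (((n : ℝ≥0∞) + 1) * ((n : ℝ≥0∞) + 1))
          = ((n : ℝ≥0∞) + 1) * 1 / (((n : ℝ≥0∞) + 1) * ((n : ℝ≥0∞) + 1)) := by rw [mul_one]
        _ = 1 / ((n : ℝ≥0∞) + 1) := ENNReal.mul_div_mul_left _ _ hne hnt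
        _ = ((n : ℝ≥0∞) + 1)⁻¹ := one_div _
    calc ((n : ℝ≥0∞) + 1) / (s n : ℝ≥0∞) ^ (2 : ℝ)
        ≤ ((n : ℝ≥0∞) + 1) / ((n : ℝ≥0∞) + 1) ^ (2 : ℝ) := ENNReal.div_le_div le_rfl h1
      _ = ((n : ℝ≥0∞) + 1)⁻¹ := h2
      _ ≤ ((n : ℝ≥0∞))⁻¹ := ENNReal.inv_le_inv.2 le_self_add
  exact htend.limsup_eq

lemma dimExprSup_anti (hs : IsPosSeq s) {τ τ' : ℝ} (h : τ ≤ τ') :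
    dimExprSup s τ' ≤ dimExprSup s τ := by
  refine Filter.limsup_le_limsup (Eventually.of_forall fun n => ?_)
  exact ENNReal.div_le_div le_rfl
    (ENNReal.rpow_le_rpow_of_exponent_le (one_le_cast_s hs n) h)

lemma two_mem_dimSet (hs : IsPosSeq s) : (2 : ℝ) ∈ {τ : ℝ | 0 ≤ τ ∧ dimExprSup s τ = 0} :=
  ⟨by norm_num, dimExprSup_two hs⟩

lemma upperDim_nonneg (hs : IsPosSeq s) : 0 ≤ upperDim s :=
  le_csInf ⟨2, two_mem_dimSet hs⟩ fun b hb => hb.1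

lemma upperDim_le_two (hs : IsPosSeq s) : upperDim s ≤ 2 :=
  csInf_le ⟨0, fun x hx => hx.1⟩ (two_mem_dimSet hs)

lemma le_upperDim (hs : IsPosSeq s) {τ : ℝ} (hτ : 0 ≤ τ) (h : 0 < dimExprSup s τ) :
    τ ≤ upperDim s := by
  refine le_csInf ⟨2, two_mem_dimSet hs⟩ fun b hb => ?_
  by_contra hlt
  push_neg at hlt
  have := dimExprSup_anti hs hlt.le
  rw [hb.2] at this
  exact absurd (lt_of_lt_of_le h this) (by simp)

lemma pos_dimExprSup_of_lt_upperDim (hs : IsPosSeq s) {τ : ℝ} (hτ : 0 ≤ τ)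
    (h : τ < upperDim s) : 0 < dimExprSup s τ := by
  by_contra hz
  push_neg at hz
  have hz' : dimExprSup s τ = 0 := le_antisymm (by simpa using hz) zero_le
  have : upperDim s ≤ τ := csInf_le ⟨0, fun x hx => hx.1⟩ ⟨hτ, hz'⟩
  linarith

end DimLayer

end AuxEnt

/-- The upper entropy dimension of the common refinement `α ∨ β`
is the maximum of the upper entropy dimensions of `α` and `β`. -/
theorem upperEntDimPart_join {X : Type*} [MeasurableSpace X]
    (μ : Measure X) [IsProbabilityMeasure μ] (T : X → X) (hT : MeasurePreserving T μ μ)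
    {ι κ : Type*} [Fintype ι] [Fintype κ] (P : ι → Set X) (Q : κ → Set X)
    (hP : IsPartition P) (hQ : IsPartition Q) :
    upperEntDimPart μ T (fun p : ι × κ => P p.1 ∩ Q p.2)
      = max (upperEntDimPart μ T P) (upperEntDimPart μ T Q) := by
  classical
  set R := fun p : ι × κ => P p.1 ∩ Q p.2 with hRdef
  have hR : IsPartition R := isPartition'_pjoin hP hQ
  set SP := {d : ℝ | ∃ s : ℕ → ℕ, IsEntGenSeq μ T P s ∧ d = upperDim s} with hSPdef
  set SQ := {d : ℝ | ∃ s : ℕ → ℕ, IsEntGenSeq μ T Q s ∧ d = upperDim s} with hSQdef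
  set SR := {d : ℝ | ∃ s : ℕ → ℕ, IsEntGenSeq μ T R s ∧ d = upperDim s} with hSRdef
  have hDP : upperEntDimPart μ T P = sSup SP := rfl
  have hDQ : upperEntDimPart μ T Q = sSup SQ := rfl
  have hDR : upperEntDimPart μ T R = sSup SR := rfl
  -- pointwise division inequalities
  have hdivP : ∀ (s : ℕ → ℕ) (n : ℕ),
      seqJoinEnt μ T P s n / n ≤ seqJoinEnt μ T R s n / n := by
    intro s n
    rcases Nat.eq_zero_or_pos n with h | h
    · subst h; simp
    · have hn : (0 : ℝ) < n := by exact_mod_cast h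
      exact (div_le_div_iff_of_pos_right hn).2 (left_le_finJoinEnt_prod hT.measurable hP hQ _)
  have hdivQ : ∀ (s : ℕ → ℕ) (n : ℕ),
      seqJoinEnt μ T Q s n / n ≤ seqJoinEnt μ T R s n / n := by
    intro s n
    rcases Nat.eq_zero_or_pos n with h | h
    · subst h; simp
    · have hn : (0 : ℝ) < n := by exact_mod_cast h
      exact (div_le_div_iff_of_pos_right hn).2 (right_le_finJoinEnt_prod hT.measurable hP hQ _)
  have hbnd : ∀ s : ℕ → ℕ, ∃ b : ℝ, ∀ n, seqJoinEnt μ T R s n / n ≤ b := fun s =>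
    ⟨max (ent μ R) 0, fun n => seqJoinEnt_div_le hT hR n⟩
  have hnnP : ∀ (s : ℕ → ℕ) (n : ℕ), 0 ≤ seqJoinEnt μ T P s n / n := fun s n =>
    div_nonneg (seqJoinEnt_nonneg hT.measurable hP n) (Nat.cast_nonneg n)
  have hnnQ : ∀ (s : ℕ → ℕ) (n : ℕ), 0 ≤ seqJoinEnt μ T Q s n / n := fun s n =>
    div_nonneg (seqJoinEnt_nonneg hT.measurable hQ n) (Nat.cast_nonneg n)
  have htransP : ∀ s : ℕ → ℕ, IsEntGenSeq μ T P s → IsEntGenSeq μ T R s := fun s hgen =>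
    ⟨hgen.1, liminf_pos_of_le (hnnP s) (hdivP s) (hbnd s) hgen.2⟩
  have htransQ : ∀ s : ℕ → ℕ, IsEntGenSeq μ T Q s → IsEntGenSeq μ T R s := fun s hgen =>
    ⟨hgen.1, liminf_pos_of_le (hnnQ s) (hdivQ s) (hbnd s) hgen.2⟩
  have hSPsub : SP ⊆ SR := by
    rintro d ⟨s, hgen, rfl⟩
    exact ⟨s, htransP s hgen, rfl⟩
  have hSQsub : SQ ⊆ SR := by
    rintro d ⟨s, hgen, rfl⟩
    exact ⟨s, htransQ s hgen, rfl⟩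
  have hbddR : BddAbove SR := ⟨2, by rintro d ⟨s, hgen, rfl⟩; exact upperDim_le_two hgen.1⟩
  have hbddP : BddAbove SP := ⟨2, by rintro d ⟨s, hgen, rfl⟩; exact upperDim_le_two hgen.1⟩
  have hbddQ : BddAbove SQ := ⟨2, by rintro d ⟨s, hgen, rfl⟩; exact upperDim_le_two hgen.1⟩
  have hnonnegR : ∀ d ∈ SR, 0 ≤ d := by
    rintro d ⟨s, hgen, rfl⟩
    exact upperDim_nonneg hgen.1
  -- the key step
  have key : ∀ sx : ℕ → ℕ, IsEntGenSeq μ T R sx → ∀ τ : ℝ, 0 ≤ τ → 0 < dimExprSup sx τ →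
      τ ≤ max (sSup SP) (sSup SQ) := by
    intro sx hgen τ hτ hpos
    obtain ⟨c0, hc0, hlt⟩ := exists_between hgen.2
    have hbR : IsBoundedUnder (· ≥ ·) atTop (fun n => seqJoinEnt μ T R sx n / n) :=
      isBoundedUnder_of ⟨0, fun n =>
        div_nonneg (seqJoinEnt_nonneg hT.measurable hR n) (Nat.cast_nonneg n)⟩
    have hev : ∀ᶠ n in atTop, c0 < seqJoinEnt μ T R sx n / n :=
      eventually_lt_of_lt_liminf hlt hbR
    obtain ⟨a, ha0, halt⟩ : ∃ a : ℝ≥0∞, 0 < a ∧ a < dimExprSup sx τ := by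
      rcases eq_or_ne (dimExprSup sx τ) ⊤ with h | h
      · exact ⟨1, one_pos, by rw [h]; exact ENNReal.one_lt_top⟩
      · exact ⟨dimExprSup sx τ / 2, ENNReal.half_pos hpos.ne', ENNReal.half_lt_self hpos.ne' h⟩
    have hfreq : ∃ᶠ n : ℕ in atTop, a < ((n : ℝ≥0∞) + 1) / (sx n : ℝ≥0∞) ^ τ :=
      frequently_lt_of_lt_limsup (by isBoundedDefault)
        (show a < Filter.atTop.limsup
          (fun n : ℕ => ((n : ℝ≥0∞) + 1) / (sx n : ℝ≥0∞) ^ τ) from halt)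
    have hcomb := hfreq.and_eventually (hev.and (eventually_ge_atTop 1))
    have hinf := Nat.frequently_atTop_iff_infinite.1 hcomb
    have hcases : {n : ℕ | c0 / 2 * n ≤ seqJoinEnt μ T P sx n
          ∧ a < ((n : ℝ≥0∞) + 1) / (sx n : ℝ≥0∞) ^ τ}.Infinite
        ∨ {n : ℕ | c0 / 2 * n ≤ seqJoinEnt μ T Q sx n
          ∧ a < ((n : ℝ≥0∞) + 1) / (sx n : ℝ≥0∞) ^ τ}.Infinite := by
      by_contra hcon
      push_neg at hcon
      have hsub : {n : ℕ | a < ((n : ℝ≥0∞) + 1) / (sx n : ℝ≥0∞) ^ τ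
            ∧ c0 < seqJoinEnt μ T R sx n / n ∧ 1 ≤ n}
          ⊆ {n : ℕ | c0 / 2 * n ≤ seqJoinEnt μ T P sx n
              ∧ a < ((n : ℝ≥0∞) + 1) / (sx n : ℝ≥0∞) ^ τ}
            ∪ {n : ℕ | c0 / 2 * n ≤ seqJoinEnt μ T Q sx n
              ∧ a < ((n : ℝ≥0∞) + 1) / (sx n : ℝ≥0∞) ^ τ} := by
        rintro n ⟨hta, hc0n, h1n⟩
        have hn : (0 : ℝ) < n := by exact_mod_cast h1n
        have hc0R : c0 * n ≤ seqJoinEnt μ T R sx n := by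
          rw [lt_div_iff₀ hn] at hc0n
          linarith
        have hPQ : seqJoinEnt μ T R sx n
            ≤ seqJoinEnt μ T P sx n + seqJoinEnt μ T Q sx n :=
          finJoinEnt_prod_le hT.measurable hP hQ _
        by_cases hcP : c0 / 2 * n ≤ seqJoinEnt μ T P sx n
        · exact Or.inl ⟨hcP, hta⟩
        · push_neg at hcP
          exact Or.inr ⟨by linarith, hta⟩
      exact absurd (Set.Finite.subset (hcon.1.union hcon.2) hsub) hinf
    rcases hcases with hc | hc
    · obtain ⟨s', hgen', hpos'⟩ := exists_entGen_subseq hT hP hgen.1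
        (by linarith : (0 : ℝ) < c0 / 2) hτ ha0 hc
      have h1 : τ ≤ upperDim s' := le_upperDim hgen'.1 hτ hpos'
      have h2 : upperDim s' ≤ sSup SP := le_csSup hbddP ⟨s', hgen', rfl⟩
      exact le_max_iff.2 (Or.inl (h1.trans h2))
    · obtain ⟨s', hgen', hpos'⟩ := exists_entGen_subseq hT hQ hgen.1
        (by linarith : (0 : ℝ) < c0 / 2) hτ ha0 hc
      have h1 : τ ≤ upperDim s' := le_upperDim hgen'.1 hτ hpos'
      have h2 : upperDim s' ≤ sSup SQ := le_csSup hbddQ ⟨s', hgen', rfl⟩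
      exact le_max_iff.2 (Or.inr (h1.trans h2))
  rw [hDP, hDQ, hDR]
  apply le_antisymm
  · rcases Set.eq_empty_or_nonempty SR with hSRe | hSRne
    · have hSPe : SP = ∅ := Set.eq_empty_of_subset_empty (hSRe ▸ hSPsub)
      have hSQe : SQ = ∅ := Set.eq_empty_of_subset_empty (hSRe ▸ hSQsub)
      rw [hSRe, hSPe, hSQe, Real.sSup_empty]
      simp
    · refine csSup_le hSRne ?_
      rintro d ⟨sx, hgen, rfl⟩
      have h0max : 0 ≤ max (sSup SP) (sSup SQ) := by
        refine key sx hgen 0 le_rfl ?_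
        have h1le : (1 : ℝ≥0∞) ≤ dimExprSup sx 0 := by
          refine le_limsup_of_frequently_le' (Filter.Frequently.of_forall fun n => ?_)
          rw [ENNReal.rpow_zero, div_one]
          exact le_add_self
        exact lt_of_lt_of_le zero_lt_one h1le
      by_contra hlt
      push_neg at hlt
      set τ := (max (sSup SP) (sSup SQ) + upperDim sx) / 2 with hτdef
      have hud0 : 0 ≤ upperDim sx := upperDim_nonneg hgen.1
      have hτ0 : 0 ≤ τ := by rw [hτdef]; linarith
      have hτlt : τ < upperDim sx := by rw [hτdef]; linarith
      have hτgt : max (sSup SP) (sSup SQ) < τ := by rw [hτdef]; linarith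
      have := key sx hgen τ hτ0 (pos_dimExprSup_of_lt_upperDim hgen.1 hτ0 hτlt)
      linarith
  · have haux : ∀ S1 : Set ℝ, S1 ⊆ SR → sSup S1 ≤ sSup SR := by
      intro S1 hsub
      rcases Set.eq_empty_or_nonempty S1 with h | h
      · rw [h, Real.sSup_empty]
        rcases Set.eq_empty_or_nonempty SR with h2 | h2
        · rw [h2, Real.sSup_empty]
        · obtain ⟨d, hd⟩ := h2
          exact le_trans (hnonnegR d hd) (le_csSup hbddR hd)
      · exact csSup_le_csSup hbddR h hsub
    exact max_le (haux SP hSPsub) (haux SQ hSQsub)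


end EntDim
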